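/- Let $n \ge 1$ and let $A_{Q_n}$ be the adjacency matrix of the hypercube $Q_n$. The continuous-time quantum walk $\psi_t = \exp(-itA_{Q_n})\delta_{0_n}$ starting at the vertex $0_n$ is instantaneous uniform mixing at time $t^\star = \pi/4$: $|\psi_{\pi/4}(v)|^2 = 2^{-n}$ for every vertex $v \in \mathbb{Z}_2^n$. -/

import Mathlib

open Matrix Complex Finset Kronecker

/-- Hamming weight of a vector in `(ZMod 2)^n`. -/
def wt {n : ℕ} (x : Fin n → ZMod 2) : ℕ := (Finset.univ.filter fun i => x i = 1).card

/-- Inner product modulo 2. -/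
def dot {n : ℕ} (a x : Fin n → ZMod 2) : ZMod 2 := ∑ i, a i * x i

/-- Adjacency matrix of the hypercube `Q_n`: `A[x,y] = 1` iff `|x ⊕ y| = 1`. -/
def adjQ (n : ℕ) : Matrix (Fin n → ZMod 2) (Fin n → ZMod 2) ℂ :=
  Matrix.of fun x y => if wt (x + y) = 1 then 1 else 0

/-- Continuous-time quantum walk `ψ_t = exp(-itA) ψ₀`. -/
noncomputable def walk {V : Type*} [Fintype V] [DecidableEq V]
    (A : Matrix V V ℂ) (ψ0 : V → ℂ) (t : ℝ) : V → ℂ :=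
  (NormedSpace.exp ((-(t : ℂ) * Complex.I) • A)).mulVec ψ0

/- ### Auxiliary development -/

/-- The character `(-1)^z` on `ZMod 2`. -/
noncomputable def chi (z : ZMod 2) : ℂ := if z = 0 then 1 else -1

lemma zmod2_cases (z : ZMod 2) : z = 0 ∨ z = 1 := by revert z; decide

lemma chi_zero : chi 0 = 1 := by simp [chi]

lemma chi_one : chi 1 = -1 := by simp [chi]

lemma chi_add (s t : ZMod 2) : chi (s + t) = chi s * chi t := by
  rcases zmod2_cases s with rfl | rfl <;> rcases zmod2_cases t with rfl | rfl <;>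
    simp [chi] <;> decide

lemma chi_sum {ι : Type*} (s : Finset ι) (f : ι → ZMod 2) :
    chi (∑ i ∈ s, f i) = ∏ i ∈ s, chi (f i) := by
  induction s using Finset.cons_induction with
  | empty => simp [chi_zero]
  | cons i s hi ih => rw [Finset.sum_cons, Finset.prod_cons, chi_add, ih]

lemma sum_zmod2 (f : ZMod 2 → ℂ) : ∑ s, f s = f 0 + f 1 := by
  rw [show (Finset.univ : Finset (ZMod 2)) = {0, 1} by decide,
    Finset.sum_insert (by decide), Finset.sum_singleton]

variable {n : ℕ}

lemma dot_comm (a x : Fin n → ZMod 2) : dot a x = dot x a := by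
  unfold dot; exact Finset.sum_congr rfl fun i _ => mul_comm _ _

lemma dot_add_right (a x y : Fin n → ZMod 2) :
    dot a (x + y) = dot a x + dot a y := by
  unfold dot; simp [mul_add, Finset.sum_add_distrib]

lemma dot_zero_right (a : Fin n → ZMod 2) : dot a 0 = 0 := by
  unfold dot; simp

lemma dot_single (a : Fin n → ZMod 2) (j : Fin n) :
    dot a (Pi.single j 1) = a j := by
  unfold dot
  rw [Finset.sum_eq_single j]
  · simp
  · intro i _ hij; simp [Pi.single_eq_of_ne hij]
  · simp

/-- `x + y = 0 ↔ x = y` in characteristic two. -/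
lemma addZ_eq_zero_iff (x y : Fin n → ZMod 2) : x + y = 0 ↔ x = y := by
  constructor
  · intro h
    funext i
    have := congr_fun h i
    simp only [Pi.add_apply, Pi.zero_apply] at this
    rcases zmod2_cases (x i) with h1 | h1 <;> rcases zmod2_cases (y i) with h2 | h2 <;>
      simp_all <;> exact absurd this (by decide)
  · rintro rfl
    funext i
    simp only [Pi.add_apply, Pi.zero_apply]
    rcases zmod2_cases (x i) with h1 | h1 <;> rw [h1] <;> decide

/-- Orthogonality of characters. -/
lemma orth (w : Fin n → ZMod 2) :
    ∑ a : Fin n → ZMod 2, chi (dot a w) = if w = 0 then (2 : ℂ) ^ n else 0 := by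
  have h1 : ∀ a : Fin n → ZMod 2, chi (dot a w) = ∏ j, chi (a j * w j) := fun a =>
    chi_sum _ _
  simp_rw [h1]
  rw [← Fintype.prod_sum fun j s => chi (s * w j)]
  have h2 : ∀ j, (∑ s : ZMod 2, chi (s * w j)) = if w j = 0 then 2 else 0 := by
    intro j
    rw [sum_zmod2]
    rcases zmod2_cases (w j) with h | h <;> simp [h, chi_zero, chi_one]
    ring
  simp_rw [h2]
  by_cases hw : w = 0
  · subst hw; simp
  · obtain ⟨j, hj⟩ : ∃ j, w j ≠ 0 := by
      by_contra h
      push_neg at h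
      exact hw (funext h)
    rw [if_neg hw]
    exact Finset.prod_eq_zero (Finset.mem_univ j) (by simp [hj])

/-- The (unnormalized) Hadamard/character matrix. -/
noncomputable def Hm (n : ℕ) : Matrix (Fin n → ZMod 2) (Fin n → ZMod 2) ℂ :=
  Matrix.of fun a x => chi (dot a x)

/-- Eigenvalue function. -/
noncomputable def lam (a : Fin n → ZMod 2) : ℂ := ∑ j, chi (a j)

lemma two_pow_ne (n : ℕ) : ((2 : ℂ) ^ n) ≠ 0 := pow_ne_zero _ two_ne_zero

lemma Hm_mul_Hm : Hm n * Hm n = ((2 : ℂ) ^ n) • 1 := by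
  ext x y
  rw [Matrix.mul_apply]
  simp only [Hm, Matrix.of_apply]
  have h1 : ∀ a : Fin n → ZMod 2, chi (dot x a) * chi (dot a y) = chi (dot a (x + y)) := by
    intro a
    rw [dot_comm x a, ← chi_add, ← dot_add_right]
  simp_rw [h1]
  rw [orth]
  simp only [Matrix.smul_apply, Matrix.one_apply, smul_eq_mul, addZ_eq_zero_iff]
  by_cases h : x = y <;> simp [h]

lemma wt_single (j : Fin n) : wt (Pi.single j 1 : Fin n → ZMod 2) = 1 := by
  unfold wt
  have : (Finset.univ.filter fun i => (Pi.single j 1 : Fin n → ZMod 2) i = 1) = {j} := by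
    ext i
    simp only [Finset.mem_filter, Finset.mem_univ, true_and, Finset.mem_singleton]
    by_cases h : i = j
    · subst h; simp
    · simp [Pi.single_eq_of_ne h, h]
  rw [this, Finset.card_singleton]

lemma count_single (z : Fin n → ZMod 2) (c : ℂ) :
    (∑ j : Fin n, if z = Pi.single j 1 then c else 0) = if wt z = 1 then c else 0 := by
  by_cases h : wt z = 1
  · obtain ⟨j₀, hj₀⟩ := Finset.card_eq_one.mp h
    have hz : z = Pi.single j₀ 1 := by
      funext i
      by_cases hi : i = j₀
      · subst hi
        have : i ∈ Finset.univ.filter fun k => z k = 1 := by rw [hj₀]; simp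
        simp only [Finset.mem_filter] at this
        simp [this.2]
      · have : i ∉ Finset.univ.filter fun k => z k = 1 := by rw [hj₀]; simp [hi]
        simp only [Finset.mem_filter, Finset.mem_univ, true_and] at this
        rcases zmod2_cases (z i) with h1 | h1
        · simp [h1, Pi.single_eq_of_ne hi]
        · exact absurd h1 this
    rw [if_pos h, Finset.sum_eq_single j₀]
    · rw [if_pos hz]
    · intro j _ hj
      rw [if_neg]
      intro hzz
      have h1 : z j₀ = 1 := by rw [hz]; simp
      rw [hzz, Pi.single_eq_of_ne (fun e => hj e.symm)] at h1
      exact absurd h1 (by decide)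
    · simp
  · rw [if_neg h]
    apply Finset.sum_eq_zero
    intro j _
    rw [if_neg]
    intro hz
    exact h (by rw [hz]; exact wt_single j)

/-- Spectral decomposition of the hypercube adjacency matrix. -/
lemma spec : Hm n * Matrix.diagonal lam * Hm n = ((2 : ℂ) ^ n) • adjQ n := by
  ext x y
  rw [Matrix.mul_apply]
  simp only [Matrix.mul_diagonal, Hm, Matrix.of_apply]
  have h1 : ∀ a : Fin n → ZMod 2, chi (dot x a) * lam a * chi (dot a y)
      = ∑ j, chi (dot a (x + y + Pi.single j 1)) := by
    intro a
    rw [dot_comm x a]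
    rw [show chi (dot a x) * lam a * chi (dot a y)
      = lam a * (chi (dot a x) * chi (dot a y)) by ring, ← chi_add, ← dot_add_right]
    rw [lam, Finset.sum_mul]
    refine Finset.sum_congr rfl fun j _ => ?_
    conv_rhs => rw [dot_add_right a (x + y) (Pi.single j 1), chi_add, dot_single]
    exact mul_comm _ _
  simp_rw [h1]
  rw [Finset.sum_comm]
  have h3 : ∀ j : Fin n, (∑ a : Fin n → ZMod 2, chi (dot a (x + y + Pi.single j 1)))
      = if x + y = Pi.single j 1 then (2 : ℂ) ^ n else 0 := by
    intro j
    rw [orth]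
    congr 1
    rw [eq_iff_iff, addZ_eq_zero_iff]
  simp_rw [h3]
  rw [count_single]
  simp only [Matrix.smul_apply, adjQ, Matrix.of_apply, smul_eq_mul]
  by_cases h : wt (x + y) = 1 <;> simp [h]

lemma Hm_right_inv : Hm n * (((2 : ℂ) ^ n)⁻¹ • Hm n) = 1 := by
  rw [Matrix.mul_smul, Hm_mul_Hm, smul_smul, inv_mul_cancel₀ (two_pow_ne n), one_smul]

lemma isUnit_Hm : IsUnit (Hm n) :=
  ⟨⟨Hm n, ((2 : ℂ) ^ n)⁻¹ • Hm n, Hm_right_inv, mul_eq_one_comm.mp Hm_right_inv⟩, rfl⟩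

lemma Hm_inv : (Hm n)⁻¹ = ((2 : ℂ) ^ n)⁻¹ • Hm n :=
  Matrix.inv_eq_right_inv Hm_right_inv

lemma adjQ_eq : adjQ n = Hm n * Matrix.diagonal lam * (Hm n)⁻¹ := by
  rw [Hm_inv, Matrix.mul_smul, spec, smul_smul, inv_mul_cancel₀ (two_pow_ne n), one_smul]

/-- The quantum walk on the hypercube `Q_n` starting at `0_n` is instantaneous
uniform mixing at time `π/4`. -/
theorem hypercube_uniform_mixing (n : ℕ) (hn : 1 ≤ n) :
    ∀ v : Fin n → ZMod 2,
      ‖walk (adjQ n) (Pi.single (0 : Fin n → ZMod 2) 1)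
        (Real.pi / 4) v‖ ^ 2 = 1 / 2 ^ n := by
  intro v
  set t : ℂ := -((Real.pi / 4 : ℝ) : ℂ) * Complex.I with ht
  -- compute the matrix exponential
  have hsmul : t • adjQ n = Hm n * (t • Matrix.diagonal lam) * (Hm n)⁻¹ := by
    rw [Matrix.mul_smul, Matrix.smul_mul, ← adjQ_eq]
  have hexp : NormedSpace.exp (t • adjQ n)
      = Hm n * Matrix.diagonal (fun a => Complex.exp (t * lam a)) * (Hm n)⁻¹ := by
    rw [hsmul, Matrix.exp_conj (Hm n) (t • Matrix.diagonal lam) isUnit_Hm]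
    congr 2
    rw [← Matrix.diagonal_smul, Matrix.exp_diagonal, Pi.exp_def]
    congr 1
    funext a
    rw [← Complex.exp_eq_exp_ℂ]
    simp [smul_eq_mul]
  have hwalk : walk (adjQ n) (Pi.single (0 : Fin n → ZMod 2) 1) (Real.pi / 4) v
      = ((2 : ℂ) ^ n)⁻¹ * ∏ j, (Complex.exp t + chi (v j) * Complex.exp (-t)) := by
    unfold walk
    rw [show (-(((Real.pi / 4 : ℝ) : ℂ)) * Complex.I) = t from rfl]
    rw [hexp, Hm_inv, Matrix.mul_smul, Matrix.mulVec_single]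
    simp only [MulOpposite.op_one, one_smul, Matrix.col_apply, Matrix.smul_apply, smul_eq_mul, mul_one]
    congr 1
    rw [Matrix.mul_apply]
    simp only [Matrix.mul_diagonal, Hm, Matrix.of_apply]
    have h1 : ∀ a : Fin n → ZMod 2,
        chi (dot v a) * Complex.exp (t * lam a) * chi (dot a 0)
        = ∏ j, (chi (a j * v j) * Complex.exp (t * chi (a j))) := by
      intro a
      rw [dot_zero_right, chi_zero, mul_one, dot_comm v a]
      rw [show chi (dot a v) = ∏ j, chi (a j * v j) from chi_sum _ _]
      rw [show Complex.exp (t * lam a) = ∏ j, Complex.exp (t * chi (a j)) by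
        rw [lam, Finset.mul_sum, Complex.exp_sum]]
      rw [← Finset.prod_mul_distrib]
    simp_rw [h1]
    rw [← Fintype.prod_sum fun j s => chi (s * v j) * Complex.exp (t * chi s)]
    apply Finset.prod_congr rfl
    intro j _
    rw [sum_zmod2]
    simp only [zero_mul, one_mul, chi_zero, chi_one, mul_one]
    rw [show t * -1 = -t by ring]
  rw [hwalk, norm_mul, mul_pow, norm_prod, ← Finset.prod_pow]
  have habs : ∀ j ∈ Finset.univ, ‖Complex.exp t + chi (v j) * Complex.exp (-t)‖ ^ 2
      = 2 := by
    intro j _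
    set c : ℂ := ((Real.pi / 4 : ℝ) : ℂ) with hc
    have he1 : Complex.exp t = Complex.cos c - Complex.sin c * Complex.I := by
      rw [ht, show -((Real.pi / 4 : ℝ) : ℂ) * Complex.I = (-(Real.pi/4 : ℝ) : ℂ) * Complex.I by
        push_cast; ring, Complex.exp_mul_I]
      rw [hc]
      push_cast
      rw [Complex.cos_neg, Complex.sin_neg]
      ring
    have he2 : Complex.exp (-t) = Complex.cos c + Complex.sin c * Complex.I := by
      rw [ht, show -(-((Real.pi / 4 : ℝ) : ℂ) * Complex.I) = ((Real.pi/4 : ℝ) : ℂ) * Complex.I by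
        ring, Complex.exp_mul_I]
    have hcos : Complex.cos c = ((Real.cos (Real.pi/4) : ℝ) : ℂ) := by
      rw [hc]; exact (Complex.ofReal_cos _).symm
    have hsin : Complex.sin c = ((Real.sin (Real.pi/4) : ℝ) : ℂ) := by
      rw [hc]; exact (Complex.ofReal_sin _).symm
    rcases zmod2_cases (v j) with h | h
    · rw [h, chi_zero, one_mul, he1, he2]
      rw [show Complex.cos c - Complex.sin c * Complex.I
          + (Complex.cos c + Complex.sin c * Complex.I) = 2 * Complex.cos c by ring]
      rw [hcos, show (2 : ℂ) * ((Real.cos (Real.pi/4) : ℝ) : ℂ)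
        = (((2 * Real.cos (Real.pi/4)) : ℝ) : ℂ) by push_cast; ring]
      rw [Complex.norm_real, Real.norm_eq_abs, Real.cos_pi_div_four]
      rw [_root_.abs_of_nonneg (by positivity), mul_pow, div_pow,
        Real.sq_sqrt (by norm_num : (0:ℝ) ≤ 2)]
      norm_num
    · rw [h, chi_one, neg_one_mul, he1, he2]
      rw [show Complex.cos c - Complex.sin c * Complex.I
          + -(Complex.cos c + Complex.sin c * Complex.I)
          = -2 * Complex.sin c * Complex.I by ring]
      rw [norm_mul, norm_mul, Complex.norm_I, mul_one]
      rw [hsin, Complex.norm_real, Real.norm_eq_abs, Real.sin_pi_div_four, norm_neg]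
      simp only [Complex.norm_two]
      rw [_root_.abs_of_nonneg (by positivity), mul_pow, div_pow,
        Real.sq_sqrt (by norm_num : (0:ℝ) ≤ 2)]
      norm_num
  rw [Finset.prod_congr rfl habs]
  rw [Finset.prod_const, Finset.card_univ, Fintype.card_fin]
  rw [norm_inv, norm_pow, Complex.norm_two, inv_pow]
  rw [pow_two, mul_inv, mul_assoc, inv_mul_cancel₀ (by positivity : ((2:ℝ)^n) ≠ 0), mul_one,
    one_div]
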